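/- Let F1 and F2 be bounded operators on a complex Hilbert space such that the numerical radius w(z1·F1 + z2·F2) ≤ 1 for all complex z1, z2 with |z1| = |z2| = 1. Then w(F1 + z·F2*) ≤ 1 for every z with |z| = 1. -/

import Mathlib

open ContinuousLinearMap

lemma sign_aux (c : ℂ) :
    ∃ u : ℂ, ‖u‖ = 1 ∧ (starRingEnd ℂ u) * c = (‖c‖ : ℂ) := by
  by_cases hc : c = 0
  · exact ⟨1, by simp [hc]⟩
  · refine ⟨c / ‖c‖, ?_, ?_⟩
    · simp [norm_div, hc, norm_ne_zero_iff.mpr hc]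
    · have h0 : (‖c‖ : ℂ) ≠ 0 := by
        exact_mod_cast Complex.ofReal_ne_zero.mpr (norm_ne_zero_iff.mpr hc)
      rw [map_div₀, Complex.conj_ofReal, div_mul_eq_mul_div, Complex.conj_mul']
      rw [sq, mul_div_assoc, div_self h0, mul_one]

theorem stmt_4 {H : Type*} [NormedAddCommGroup H] [InnerProductSpace ℂ H] [CompleteSpace H]
    (F1 F2 : H →L[ℂ] H)
    (h : ∀ z1 z2 : ℂ, ‖z1‖ = 1 → ‖z2‖ = 1 →
      ∀ x : H, ‖(inner ℂ ((z1 • F1 + z2 • F2) x) x : ℂ)‖ ≤ ‖x‖ ^ 2) :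
    ∀ z : ℂ, ‖z‖ = 1 →
      ∀ x : H, ‖(inner ℂ ((F1 + z • adjoint F2) x) x : ℂ)‖ ≤ ‖x‖ ^ 2 := by
  intro z hz x
  set a : ℂ := inner ℂ (F1 x) x with ha
  set b : ℂ := inner ℂ (F2 x) x with hb
  obtain ⟨u1, hu1, hu1a⟩ := sign_aux a
  obtain ⟨u2, hu2, hu2b⟩ := sign_aux b
  have key : ‖a‖ + ‖b‖ ≤ ‖x‖ ^ 2 := by
    have := h u1 u2 hu1 hu2 x
    have heq : (inner ℂ ((u1 • F1 + u2 • F2) x) x : ℂ) = (‖a‖ : ℂ) + (‖b‖ : ℂ) := by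
      simp only [add_apply, coe_smul', Pi.smul_apply, inner_add_left, inner_smul_left]
      rw [← ha, ← hb, hu1a, hu2b]
    rw [heq] at this
    calc ‖a‖ + ‖b‖ = ‖((‖a‖ : ℂ) + (‖b‖ : ℂ))‖ := by
            rw [← Complex.ofReal_add, Complex.norm_real,
              Real.norm_of_nonneg (by positivity)]
      _ ≤ ‖x‖ ^ 2 := this
  have hadj : (inner ℂ ((adjoint F2) x) x : ℂ) = starRingEnd ℂ b := by
    rw [adjoint_inner_left, hb, ← inner_conj_symm]
  have hval : (inner ℂ ((F1 + z • adjoint F2) x) x : ℂ)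
      = a + starRingEnd ℂ z * starRingEnd ℂ b := by
    simp only [add_apply, coe_smul', Pi.smul_apply, inner_add_left, inner_smul_left]
    rw [← ha, hadj]
  rw [hval]
  calc ‖a + starRingEnd ℂ z * starRingEnd ℂ b‖
      ≤ ‖a‖ + ‖starRingEnd ℂ z * starRingEnd ℂ b‖ := norm_add_le _ _
    _ = ‖a‖ + ‖b‖ := by
        rw [norm_mul, RCLike.norm_conj, RCLike.norm_conj, hz, one_mul]
    _ ≤ ‖x‖ ^ 2 := key
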